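/- Let (X, 𝔄, μ) be a σ-finite measure space and S, g : X × ℝ → ℝ measurable such that for all a in an open interval J: exp(−S(·, a)) is μ-integrable with Z(a) = ∫ exp(−S(x,a)) dμ > 0; a ↦ S(x, a) and a ↦ g(x, a) are differentiable for μ-a.e. x; and the functions |∂_a S| e^{−S}, |g| e^{−S}, |∂_a g| e^{−S}, and |g ∂_a S| e^{−S} are dominated uniformly in a ∈ J by μ-integrable functions. Then the map a ↦ Ĩ(a) = E_{Q_a}[g(·, a)] is differentiable on J with derivative Ĩ'(a) = E_{Q_a}[∂_a g(·, a)] − Cov_{Q_a}( g(·, a), ∂_a S(·, a) ), where Cov_{Q}[u, v] = E_Q[uv] − E_Q[u] E_Q[v]. -/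

import Mathlib

open MeasureTheory Real Filter Topology Metric NNReal ENNReal

lemma aesm_deriv_param {X : Type*} [MeasurableSpace X] (μ : Measure X) (f : X → ℝ → ℝ)
    (hf : Measurable fun p : X × ℝ => f p.1 p.2) (a : ℝ)
    (hd : ∀ᵐ x ∂μ, DifferentiableAt ℝ (f x) a) :
    AEStronglyMeasurable (fun x => deriv (f x) a) μ := by
  have hslice : ∀ b : ℝ, Measurable fun x => f x b := fun b =>
    hf.comp (measurable_id.prodMk measurable_const)
  have key : AEMeasurable (fun x => deriv (f x) a) μ := by
    refine aemeasurable_of_tendsto_metrizable_ae'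
      (f := fun (n : ℕ) (x : X) => ((n : ℝ) + 1) * (f x (a + ((n : ℝ) + 1)⁻¹) - f x a))
      (fun n => (measurable_const.mul ((hslice _).sub (hslice a))).aemeasurable) ?_
    filter_upwards [hd] with x hx
    have h1 : Tendsto (fun n : ℕ => a + ((n : ℝ) + 1)⁻¹) atTop (𝓝[≠] a) := by
      rw [tendsto_nhdsWithin_iff]
      constructor
      · have : Tendsto (fun n : ℕ => ((n : ℝ) + 1)⁻¹) atTop (𝓝 0) := by
          simpa using tendsto_one_div_add_atTop_nhds_zero_nat (𝕜 := ℝ)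
        simpa using tendsto_const_nhds.add this
      · filter_upwards with n
        have : (0:ℝ) < ((n : ℝ) + 1)⁻¹ := by positivity
        simp [Set.mem_compl, ne_eq]
        linarith
    have h2 := (hasDerivAt_iff_tendsto_slope.mp hx.hasDerivAt).comp h1
    refine h2.congr fun n => ?_
    have hne : ((n : ℝ) + 1) ≠ 0 := by positivity
    simp only [Function.comp, slope_def_field]
    rw [add_sub_cancel_left, div_inv_eq_mul]
    ring
  exact key.aestronglyMeasurable


/-- **Gradient (covariance) formula for Gibbs expectations.**
Let `(X, 𝔄, μ)` be σ-finite and `S, g : X × ℝ → ℝ` measurable such that for all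
`a` in an open interval `J = (l, r)`: `exp (-S(·,a))` is integrable with
`Z a = ∫ exp (-S x a) dμ > 0`; `a ↦ S x a` and `a ↦ g x a` are differentiable
for a.e. `x`; and `|∂ₐS| e^{-S}`, `|g| e^{-S}`, `|∂ₐg| e^{-S}`, `|g ∂ₐS| e^{-S}`
are dominated uniformly in `a ∈ J` by integrable functions. Then
`Ĩ(a) = E_{Q_a}[g(·,a)]` is differentiable on `J` with
`Ĩ'(a) = E_{Q_a}[∂ₐg(·,a)] - Cov_{Q_a}(g(·,a), ∂ₐS(·,a))`,
where `Q_a = μ.withDensity (exp (-S(·,a))/Z a)` and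
`Cov_Q[u,v] = E_Q[uv] - E_Q[u] E_Q[v]`. -/
theorem gibbs_expectation_gradient_formula
    {X : Type*} [MeasurableSpace X] (μ : Measure X) [SigmaFinite μ]
    (l r : ℝ) (S g : X → ℝ → ℝ)
    (hSm : Measurable fun p : X × ℝ => S p.1 p.2)
    (hgm : Measurable fun p : X × ℝ => g p.1 p.2)
    (hint : ∀ a ∈ Set.Ioo l r, Integrable (fun x => Real.exp (-S x a)) μ)
    (hZpos : ∀ a ∈ Set.Ioo l r, 0 < ∫ x, Real.exp (-S x a) ∂μ)
    (hSdiff : ∀ᵐ x ∂μ, ∀ a ∈ Set.Ioo l r, DifferentiableAt ℝ (S x) a)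
    (hgdiff : ∀ᵐ x ∂μ, ∀ a ∈ Set.Ioo l r, DifferentiableAt ℝ (g x) a)
    (hdom : ∃ G : X → ℝ, Integrable G μ ∧
      ∀ᵐ x ∂μ, ∀ a ∈ Set.Ioo l r,
        |deriv (S x) a| * Real.exp (-S x a) ≤ G x ∧
        |g x a| * Real.exp (-S x a) ≤ G x ∧
        |deriv (g x) a| * Real.exp (-S x a) ≤ G x ∧
        |g x a * deriv (S x) a| * Real.exp (-S x a) ≤ G x) :
    ∀ a ∈ Set.Ioo l r,
      HasDerivAt
        (fun a' => ∫ x, g x a'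
          ∂(μ.withDensity fun x =>
            ENNReal.ofReal (Real.exp (-S x a') / ∫ x', Real.exp (-S x' a') ∂μ)))
        ((∫ x, deriv (g x) a
            ∂(μ.withDensity fun x =>
              ENNReal.ofReal (Real.exp (-S x a) / ∫ x', Real.exp (-S x' a) ∂μ))) -
          ((∫ x, g x a * deriv (S x) a
              ∂(μ.withDensity fun x =>
                ENNReal.ofReal (Real.exp (-S x a) / ∫ x', Real.exp (-S x' a) ∂μ))) -
            (∫ x, g x a
              ∂(μ.withDensity fun x =>
                ENNReal.ofReal (Real.exp (-S x a) / ∫ x', Real.exp (-S x' a) ∂μ))) *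
            (∫ x, deriv (S x) a
              ∂(μ.withDensity fun x =>
                ENNReal.ofReal (Real.exp (-S x a) / ∫ x', Real.exp (-S x' a) ∂μ)))))
        a := by
    classical
  obtain ⟨G, hGint, hGbd⟩ := hdom
  intro a ha
  have hSslice : ∀ b : ℝ, Measurable fun x => S x b := fun b =>
    hSm.comp (measurable_id.prodMk measurable_const)
  have hgslice : ∀ b : ℝ, Measurable fun x => g x b := fun b =>
    hgm.comp (measurable_id.prodMk measurable_const)
  have hZa : 0 < ∫ x, Real.exp (-S x a) ∂μ := hZpos a ha
  -- rewrite withDensity integrals as quotients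
  have hrw : ∀ (a' : ℝ) (f : X → ℝ),
      (∫ x, f x ∂(μ.withDensity fun x =>
        ENNReal.ofReal (Real.exp (-S x a') / ∫ x', Real.exp (-S x' a') ∂μ)))
        = (∫ x, f x * Real.exp (-S x a') ∂μ) / ∫ x', Real.exp (-S x' a') ∂μ := by
    intro a' f
    have hZnn : 0 ≤ ∫ x', Real.exp (-S x' a') ∂μ :=
      integral_nonneg fun x => (Real.exp_pos _).le
    have hnn : ∀ x, 0 ≤ Real.exp (-S x a') / ∫ x', Real.exp (-S x' a') ∂μ := fun x =>
      div_nonneg (Real.exp_pos _).le hZnn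
    have hmeas : Measurable fun x =>
        Real.toNNReal (Real.exp (-S x a') / ∫ x', Real.exp (-S x' a') ∂μ) :=
      ((Real.measurable_exp.comp (hSslice a').neg).div_const _).real_toNNReal
    have h1 : (∫ x, f x ∂(μ.withDensity fun x =>
        ((Real.toNNReal (Real.exp (-S x a') / ∫ x', Real.exp (-S x' a') ∂μ) : ℝ≥0) : ℝ≥0∞)))
        = ∫ x, Real.toNNReal (Real.exp (-S x a') / ∫ x', Real.exp (-S x' a') ∂μ) • f x ∂μ :=
      integral_withDensity_eq_integral_smul hmeas f
    have h2 : ∀ x, Real.toNNReal (Real.exp (-S x a') / ∫ x', Real.exp (-S x' a') ∂μ) • f x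
        = (∫ x', Real.exp (-S x' a') ∂μ)⁻¹ * (f x * Real.exp (-S x a')) := by
      intro x
      rw [NNReal.smul_def, smul_eq_mul, Real.coe_toNNReal _ (hnn x)]
      ring
    calc (∫ x, f x ∂(μ.withDensity fun x =>
          ENNReal.ofReal (Real.exp (-S x a') / ∫ x', Real.exp (-S x' a') ∂μ)))
        = ∫ x, Real.toNNReal (Real.exp (-S x a') / ∫ x', Real.exp (-S x' a') ∂μ) • f x ∂μ := h1
      _ = ∫ x, (∫ x', Real.exp (-S x' a') ∂μ)⁻¹ * (f x * Real.exp (-S x a')) ∂μ := by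
          simp_rw [h2]
      _ = (∫ x, f x * Real.exp (-S x a') ∂μ) / ∫ x', Real.exp (-S x' a') ∂μ := by
          rw [integral_const_mul, inv_mul_eq_div]
  -- choose a ball inside the interval
  obtain ⟨ε, εpos, hball⟩ := Metric.isOpen_iff.mp isOpen_Ioo a ha
  -- a.e.-measurability of the parametric derivatives at a
  have hSd' : AEStronglyMeasurable (fun x => deriv (S x) a) μ :=
    aesm_deriv_param μ S hSm a (hSdiff.mono fun x hx => hx a ha)
  have hgd' : AEStronglyMeasurable (fun x => deriv (g x) a) μ :=
    aesm_deriv_param μ g hgm a (hgdiff.mono fun x hx => hx a ha)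
  have hexpm : ∀ b : ℝ, Measurable fun x => Real.exp (-S x b) := fun b =>
    Real.measurable_exp.comp (hSslice b).neg
  -- derivative of Z
  have hZd : HasDerivAt (fun a' => ∫ x, Real.exp (-S x a') ∂μ)
      (∫ x, -(deriv (S x) a * Real.exp (-S x a)) ∂μ) a := by
    refine (hasDerivAt_integral_of_dominated_loc_of_deriv_le
      (F := fun a' x => Real.exp (-S x a'))
      (F' := fun a' x => -(deriv (S x) a' * Real.exp (-S x a')))
      (bound := G) (ball_mem_nhds a εpos)
      (Filter.Eventually.of_forall fun a' => (hexpm a').aestronglyMeasurable)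
      (hint a ha) ?_ ?_ hGint ?_).2
    · exact (hSd'.mul (hexpm a).aestronglyMeasurable).neg
    · filter_upwards [hGbd] with x hx a' ha'
      have := (hx a' (hball ha')).1
      rw [norm_neg, norm_mul, Real.norm_eq_abs, Real.norm_eq_abs,
        abs_of_pos (Real.exp_pos _)]
      exact this
    · filter_upwards [hSdiff] with x hx a' ha'
      have h := ((hx a' (hball ha')).hasDerivAt).neg.exp
      refine h.congr_deriv ?_
      simp only [Pi.neg_apply]
      ring
  -- derivative of N
  have hNint : ∀ b ∈ Set.Ioo l r, Integrable (fun x => g x b * Real.exp (-S x b)) μ := by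
    intro b hb
    refine Integrable.mono' hGint ((hgslice b).mul (hexpm b)).aestronglyMeasurable ?_
    filter_upwards [hGbd] with x hx
    rw [Real.norm_eq_abs, abs_mul, abs_of_pos (Real.exp_pos _)]
    exact (hx b hb).2.1
  have hNd : HasDerivAt (fun a' => ∫ x, g x a' * Real.exp (-S x a') ∂μ)
      (∫ x, (deriv (g x) a - g x a * deriv (S x) a) * Real.exp (-S x a) ∂μ) a := by
    refine (hasDerivAt_integral_of_dominated_loc_of_deriv_le
      (F := fun a' x => g x a' * Real.exp (-S x a'))
      (F' := fun a' x => (deriv (g x) a' - g x a' * deriv (S x) a') * Real.exp (-S x a'))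
      (bound := fun x => G x + G x) (ball_mem_nhds a εpos)
      (Filter.Eventually.of_forall fun a' =>
        ((hgslice a').mul (hexpm a')).aestronglyMeasurable)
      (hNint a ha) ?_ ?_ (hGint.add hGint) ?_).2
    · exact ((hgd'.sub ((hgslice a).aestronglyMeasurable.mul hSd')).mul
        (hexpm a).aestronglyMeasurable)
    · filter_upwards [hGbd] with x hx a' ha'
      have h1 := (hx a' (hball ha')).2.2.1
      have h2 := (hx a' (hball ha')).2.2.2
      rw [norm_mul, Real.norm_eq_abs, Real.norm_eq_abs, abs_of_pos (Real.exp_pos _)]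
      calc |deriv (g x) a' - g x a' * deriv (S x) a'| * Real.exp (-S x a')
          ≤ (|deriv (g x) a'| + |g x a' * deriv (S x) a'|) * Real.exp (-S x a') := by
            gcongr
            exact abs_sub _ _
        _ = |deriv (g x) a'| * Real.exp (-S x a')
            + |g x a' * deriv (S x) a'| * Real.exp (-S x a') := by ring
        _ ≤ G x + G x := add_le_add h1 h2
    · filter_upwards [hSdiff, hgdiff] with x hxS hxg a' ha'
      have hS := ((hxS a' (hball ha')).hasDerivAt).neg.exp
      have hg := (hxg a' (hball ha')).hasDerivAt
      have h := hg.mul hS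
      refine h.congr_deriv ?_
      simp only [Pi.neg_apply]
      ring
  -- split the derivative integrals
  have hIdg : Integrable (fun x => deriv (g x) a * Real.exp (-S x a)) μ := by
    refine Integrable.mono' hGint (hgd'.mul (hexpm a).aestronglyMeasurable) ?_
    filter_upwards [hGbd] with x hx
    rw [Real.norm_eq_abs, abs_mul, abs_of_pos (Real.exp_pos _)]
    exact (hx a ha).2.2.1
  have hIgs : Integrable (fun x => g x a * deriv (S x) a * Real.exp (-S x a)) μ := by
    refine Integrable.mono' hGint
      (((hgslice a).aestronglyMeasurable.mul hSd').mul (hexpm a).aestronglyMeasurable) ?_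
    filter_upwards [hGbd] with x hx
    rw [Real.norm_eq_abs, abs_mul, abs_of_pos (Real.exp_pos _)]
    exact (hx a ha).2.2.2
  have hNd' : HasDerivAt (fun a' => ∫ x, g x a' * Real.exp (-S x a') ∂μ)
      ((∫ x, deriv (g x) a * Real.exp (-S x a) ∂μ)
        - ∫ x, g x a * deriv (S x) a * Real.exp (-S x a) ∂μ) a := by
    have heq : (∫ x, (deriv (g x) a - g x a * deriv (S x) a) * Real.exp (-S x a) ∂μ)
        = (∫ x, deriv (g x) a * Real.exp (-S x a) ∂μ)
          - ∫ x, g x a * deriv (S x) a * Real.exp (-S x a) ∂μ := by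
      rw [← integral_sub hIdg hIgs]
      congr 1; funext x; ring
    rwa [heq] at hNd
  have hZd' : HasDerivAt (fun a' => ∫ x, Real.exp (-S x a') ∂μ)
      (-(∫ x, deriv (S x) a * Real.exp (-S x a) ∂μ)) a := by
    rwa [integral_neg] at hZd
  -- quotient rule
  have hdiv := hNd'.div hZd' (ne_of_gt hZa)
  have hfun : (fun a' => ∫ x, g x a' ∂(μ.withDensity fun x =>
      ENNReal.ofReal (Real.exp (-S x a') / ∫ x', Real.exp (-S x' a') ∂μ)))
      = fun a' => (∫ x, g x a' * Real.exp (-S x a') ∂μ) / ∫ x', Real.exp (-S x' a') ∂μ :=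
    funext fun a' => hrw a' (fun x => g x a')
  rw [hfun, hrw a (fun x => deriv (g x) a), hrw a (fun x => g x a * deriv (S x) a),
    hrw a (fun x => g x a), hrw a (fun x => deriv (S x) a)]
  refine hdiv.congr_deriv ?_
  have hZne : (∫ x, Real.exp (-S x a) ∂μ) ≠ 0 := ne_of_gt hZa
  field_simp
  ring
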